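/- arXiv:2104.07745 — 2 statements merged into one kernel-verified Lean document; each statement's English description precedes it below -/
import Mathlib

section
/- Let H1 and H2 be complex Hilbert spaces, let D be a Banach space equipped with a continuous injective linear map j : D → H1, and let A : D → H2 be a continuous linear map. Assume that (1) the range of A is closed in H2, and (2) the image under j of the kernel of A is a closed subset of H1 with respect to the H1-norm. Then D is complete with respect to the graph norm ‖u‖_A = ‖j u‖_{H1} + ‖A u‖_{H2}; equivalently, the unbounded operator from H1 to H2 with domain j(D) determined by A is a closed operator (its graph {(j u, A u) : u ∈ D} is closed in H1 × H2). -/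
/-- Proposition (Mendoza): if `A : D → H2` is a continuous linear map from a Banach space `D`
which includes continuously and injectively into a Hilbert space `H1` via `j`, the range of `A`
is closed and `j '' (ker A)` is closed in `H1`, then the unbounded operator in `H1` with domain
`j(D)` determined by `A` is closed, i.e. its graph `{(j u, A u) : u ∈ D}` is closed in
`H1 × H2`. -/
theorem stmt0
    {H1 H2 D : Type*}
    [NormedAddCommGroup H1] [InnerProductSpace ℂ H1] [CompleteSpace H1]
    [NormedAddCommGroup H2] [InnerProductSpace ℂ H2] [CompleteSpace H2]
    [NormedAddCommGroup D] [NormedSpace ℂ D] [CompleteSpace D]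
    (j : D →L[ℂ] H1) (hj : Function.Injective j)
    (A : D →L[ℂ] H2)
    (hran : IsClosed (Set.range A))
    (hker : IsClosed (j '' (LinearMap.ker (A : D →ₗ[ℂ] H2) : Set D))) :
    IsClosed {p : H1 × H2 | ∃ u : D, p = (j u, A u)} := by
  -- the range of A as a closed submodule
  have hranS : IsClosed ((LinearMap.range (A : D →ₗ[ℂ] H2) : Submodule ℂ H2) : Set H2) := by
    convert hran using 1; ext y; simp
  haveI : CompleteSpace (LinearMap.range (A : D →ₗ[ℂ] H2)) := hranS.completeSpace_coe
  -- corestriction of A to its range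
  set Ahat : D →L[ℂ] (LinearMap.range (A : D →ₗ[ℂ] H2)) :=
    A.codRestrict (LinearMap.range (A : D →ₗ[ℂ] H2)) (fun x => LinearMap.mem_range_self _ x) with hAhat
  have hsurj : Function.Surjective Ahat := by
    rintro ⟨v, u, hu⟩
    exact ⟨u, Subtype.ext hu⟩
  obtain ⟨C, hC0, hC⟩ := Ahat.exists_preimage_norm_le hsurj
  -- sequential closedness
  apply IsSeqClosed.isClosed
  intro x p hx hp
  choose u hu using hx
  have hj1 : Filter.Tendsto (fun n => j (u n)) Filter.atTop (nhds p.1) := by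
    refine ((continuous_fst.tendsto p).comp hp).congr fun n => ?_
    simp [Function.comp, hu n]
  have hA2 : Filter.Tendsto (fun n => A (u n)) Filter.atTop (nhds p.2) := by
    refine ((continuous_snd.tendsto p).comp hp).congr fun n => ?_
    simp [Function.comp, hu n]
  -- p.2 is in the range of A
  have hp2 : p.2 ∈ Set.range A :=
    hran.mem_of_tendsto hA2 (Filter.Eventually.of_forall fun n => ⟨u n, rfl⟩)
  obtain ⟨w, hw⟩ := hp2
  -- choose small preimages v n of A (u n) - A w
  have hv : ∀ n, ∃ v : D, A v = A (u n) - A w ∧ ‖v‖ ≤ C * ‖A (u n) - A w‖ := by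
    intro n
    obtain ⟨v, hv1, hv2⟩ := hC (Ahat (u n) - Ahat w)
    refine ⟨v, ?_, ?_⟩
    · have := congrArg (Subtype.val) hv1
      exact this
    · calc ‖v‖ ≤ C * ‖Ahat (u n) - Ahat w‖ := hv2
        _ = C * ‖A (u n) - A w‖ := by congr 1
  choose v hv1 hv2 using hv
  -- v n → 0
  have hvz : Filter.Tendsto v Filter.atTop (nhds 0) := by
    have hAn : Filter.Tendsto (fun n => C * ‖A (u n) - A w‖) Filter.atTop (nhds 0) := by
      have : Filter.Tendsto (fun n => A (u n) - A w) Filter.atTop (nhds 0) := by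
        simpa [hw] using hA2.sub_const (A w)
      simpa using (this.norm.const_mul C)
    rw [tendsto_zero_iff_norm_tendsto_zero]
    exact squeeze_zero (fun n => norm_nonneg _) hv2 hAn
  -- k n := u n - w - v n lies in ker A, and j (k n) → p.1 - j w
  have hk : ∀ n, u n - w - v n ∈ LinearMap.ker (A : D →ₗ[ℂ] H2) := by
    intro n
    simp [LinearMap.mem_ker, hv1 n, sub_sub]
  have hjk : Filter.Tendsto (fun n => j (u n - w - v n)) Filter.atTop
      (nhds (p.1 - j w)) := by
    have h1 : Filter.Tendsto (fun n => j (u n) - j w - j (v n)) Filter.atTop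
        (nhds (p.1 - j w - 0)) :=
      (hj1.sub_const (j w)).sub (by simpa [Function.comp_def] using (j.continuous.tendsto 0).comp hvz)
    simpa using h1.congr (fun n => by simp)
  have hmem : p.1 - j w ∈ j '' (LinearMap.ker (A : D →ₗ[ℂ] H2) : Set D) :=
    hker.mem_of_tendsto hjk
      (Filter.Eventually.of_forall fun n => ⟨u n - w - v n, hk n, rfl⟩)
  obtain ⟨k, hkker, hkeq⟩ := hmem
  refine ⟨w + k, ?_⟩
  have hAk : A k = 0 := hkker
  have h1 : p.1 = j (w + k) := by rw [map_add, hkeq]; abel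
  have h2 : p.2 = A (w + k) := by rw [map_add, hAk, add_zero, hw]
  rw [Prod.ext_iff]; exact ⟨h1, h2⟩
end

section
/- Let α ∈ ℝ with α ≠ 0. Then there exists a constant c > 0 such that for every Schwartz function u : ℝ → ℂ, ‖u'' + 2 u' − α u‖²_{L²(ℝ)} ≥ c (‖u‖²_{L²(ℝ)} + ‖u'‖²_{L²(ℝ)} + ‖u''‖²_{L²(ℝ)}). In particular, the operator u ↦ u'' + 2u' − αu is bounded below from the H²-norm to the L²-norm on Schwartz functions. -/
open MeasureTheory SchwartzMap Filter
open scoped ComplexConjugate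

noncomputable section

lemma sm_mul_conj_int (f g : SchwartzMap ℝ ℂ) :
    Integrable (fun x => f x * conj (g x)) := by
  have h : Integrable (fun x => conj (g x) * f x) := by
    refine f.integrable.bdd_mul (c := SchwartzMap.seminorm ℝ 0 0 g) ?_ (Filter.Eventually.of_forall fun x => ?_)
    · exact (Complex.continuous_conj.comp g.continuous).aestronglyMeasurable
    · simpa using g.norm_le_seminorm ℝ x
  have e : (fun x => f x * conj (g x)) = fun x => conj (g x) * f x := by
    funext x; ring
  rw [e]; exact h

lemma sm_deriv_coe (f : SchwartzMap ℝ ℂ) : deriv (⇑f) = ⇑(derivCLM ℝ ℂ f) :=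
  funext fun x => (derivCLM_apply ℝ f x).symm

lemma sm_ibp (f g : SchwartzMap ℝ ℂ) :
    (∫ x : ℝ, (derivCLM ℝ ℂ f x * conj (g x) + f x * conj (derivCLM ℝ ℂ g x))) = 0 := by
  apply integral_eq_zero_of_hasDerivAt_of_integrable
    (f := fun x => f x * conj (g x))
  · intro x
    have hf := f.differentiableAt.hasDerivAt (x := x)
    have hg := (g.differentiableAt.hasDerivAt (x := x)).star
    have := hf.mul hg
    simp only [derivCLM_apply]
    convert this using 1 <;> rfl
  · have h1 := sm_mul_conj_int (derivCLM ℝ ℂ f) g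
    have h2 := sm_mul_conj_int f (derivCLM ℝ ℂ g)
    exact h1.add h2
  · exact sm_mul_conj_int f g

lemma int_re (f g : SchwartzMap ℝ ℂ) :
    Integrable (fun x => (f x * conj (g x)).re) := by
  have := (sm_mul_conj_int f g).re
  simpa only [RCLike.re_to_complex] using this

lemma re_symm (a b : ℂ) : (a * conj b).re = (b * conj a).re := by
  simp [Complex.mul_re, Complex.conj_re, Complex.conj_im]; ring

lemma re_self (z : ℂ) : (z * conj z).re = ‖z‖ ^ 2 := by
  rw [Complex.mul_conj, Complex.ofReal_re, ← Complex.sq_norm]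

lemma sm_ibp_re (f g : SchwartzMap ℝ ℂ) :
    (∫ x : ℝ, (derivCLM ℝ ℂ f x * conj (g x)).re) +
      (∫ x : ℝ, (f x * conj (derivCLM ℝ ℂ g x)).re) = 0 := by
  have h := sm_ibp f g
  have h2 := congrArg Complex.re h
  rw [integral_add (sm_mul_conj_int (derivCLM ℝ ℂ f) g) (sm_mul_conj_int f (derivCLM ℝ ℂ g))] at h
  have e1 : (∫ x : ℝ, (derivCLM ℝ ℂ f x * conj (g x)).re) =
      (∫ x : ℝ, derivCLM ℝ ℂ f x * conj (g x)).re := by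
    simpa using integral_re (sm_mul_conj_int (derivCLM ℝ ℂ f) g)
  have e2 : (∫ x : ℝ, (f x * conj (derivCLM ℝ ℂ g x)).re) =
      (∫ x : ℝ, f x * conj (derivCLM ℝ ℂ g x)).re := by
    simpa using integral_re (sm_mul_conj_int f (derivCLM ℝ ℂ g))
  rw [e1, e2, ← Complex.add_re, h, Complex.zero_re]

lemma L1 (u : SchwartzMap ℝ ℂ) :
    (∫ x : ℝ, (derivCLM ℝ ℂ u x * conj (u x)).re) = 0 := by
  have h := sm_ibp_re u u
  have e : (∫ x : ℝ, (u x * conj (derivCLM ℝ ℂ u x)).re)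
      = (∫ x : ℝ, (derivCLM ℝ ℂ u x * conj (u x)).re) := by
    apply integral_congr_ae; filter_upwards with x; exact re_symm _ _
  rw [e] at h; linarith

lemma L3 (u : SchwartzMap ℝ ℂ) :
    (∫ x : ℝ, (derivCLM ℝ ℂ (derivCLM ℝ ℂ u) x * conj (u x)).re)
      = - ∫ x : ℝ, ‖derivCLM ℝ ℂ u x‖ ^ 2 := by
  have h := sm_ibp_re (derivCLM ℝ ℂ u) u
  have e : (∫ x : ℝ, (derivCLM ℝ ℂ u x * conj (derivCLM ℝ ℂ u x)).re)
      = ∫ x : ℝ, ‖derivCLM ℝ ℂ u x‖ ^ 2 := by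
    apply integral_congr_ae; filter_upwards with x; exact re_self _
  rw [e] at h; linarith

lemma L2 (u : SchwartzMap ℝ ℂ) :
    (∫ x : ℝ, (derivCLM ℝ ℂ (derivCLM ℝ ℂ u) x * conj (derivCLM ℝ ℂ u x)).re) = 0 :=
  L1 (derivCLM ℝ ℂ u)

lemma int_nsq (f : SchwartzMap ℝ ℂ) : Integrable (fun x => ‖f x‖ ^ 2) := by
  have := int_re f f
  refine this.congr (Filter.Eventually.of_forall fun x => re_self _)

lemma point_expand (α : ℝ) (a b w : ℂ) :
    ‖a + 2 * b - (α : ℂ) * w‖ ^ 2 =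
      ‖a‖ ^ 2 + 4 * ‖b‖ ^ 2 + α ^ 2 * ‖w‖ ^ 2
        + 4 * (a * conj b).re - 2 * α * (a * conj w).re - 4 * α * (b * conj w).re := by
  have h : ∀ z : ℂ, ‖z‖ ^ 2 = z.re ^ 2 + z.im ^ 2 := by
    intro z
    rw [← re_self z, Complex.mul_re, Complex.conj_re, Complex.conj_im]; ring
  simp only [h, Complex.add_re, Complex.add_im, Complex.sub_re, Complex.sub_im,
    Complex.mul_re, Complex.mul_im, Complex.conj_re, Complex.conj_im,
    Complex.ofReal_re, Complex.ofReal_im, Complex.re_ofNat, Complex.im_ofNat]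
  ring

lemma main_identity (α : ℝ) (u : SchwartzMap ℝ ℂ) :
    (∫ x : ℝ, ‖derivCLM ℝ ℂ (derivCLM ℝ ℂ u) x + 2 * derivCLM ℝ ℂ u x - (α : ℂ) * u x‖ ^ 2)
      = (∫ x : ℝ, ‖derivCLM ℝ ℂ (derivCLM ℝ ℂ u) x‖ ^ 2)
        + (4 + 2 * α) * (∫ x : ℝ, ‖derivCLM ℝ ℂ u x‖ ^ 2)
        + α ^ 2 * (∫ x : ℝ, ‖u x‖ ^ 2) := by
  set a := derivCLM ℝ ℂ (derivCLM ℝ ℂ u) with ha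
  set b := derivCLM ℝ ℂ u with hb
  have e : (fun x : ℝ => ‖a x + 2 * b x - (α : ℂ) * u x‖ ^ 2)
      = fun x : ℝ => ‖a x‖ ^ 2 + 4 * ‖b x‖ ^ 2 + α ^ 2 * ‖u x‖ ^ 2
          + 4 * (a x * conj (b x)).re - 2 * α * (a x * conj (u x)).re
          - 4 * α * (b x * conj (u x)).re :=
    funext fun x => point_expand α _ _ _
  have h1 := int_nsq a
  have h2 := (int_nsq b).const_mul 4
  have h3 := (int_nsq u).const_mul (α ^ 2)
  have h4 := (int_re a b).const_mul 4
  have h5 := (int_re a u).const_mul (2 * α)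
  have h6 := (int_re b u).const_mul (4 * α)
  rw [show (∫ x : ℝ, ‖a x + 2 * b x - (α : ℂ) * u x‖ ^ 2)
      = ∫ x : ℝ, (‖a x‖ ^ 2 + 4 * ‖b x‖ ^ 2 + α ^ 2 * ‖u x‖ ^ 2
          + 4 * (a x * conj (b x)).re - 2 * α * (a x * conj (u x)).re
          - 4 * α * (b x * conj (u x)).re) from by rw [e]]
  have h12 : Integrable (fun x : ℝ => ‖a x‖ ^ 2 + 4 * ‖b x‖ ^ 2) := h1.add h2
  have h13 : Integrable (fun x : ℝ => ‖a x‖ ^ 2 + 4 * ‖b x‖ ^ 2 + α ^ 2 * ‖u x‖ ^ 2) :=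
    h12.add h3
  have h14 : Integrable (fun x : ℝ => ‖a x‖ ^ 2 + 4 * ‖b x‖ ^ 2 + α ^ 2 * ‖u x‖ ^ 2
      + 4 * (a x * conj (b x)).re) := h13.add h4
  have h15 : Integrable (fun x : ℝ => ‖a x‖ ^ 2 + 4 * ‖b x‖ ^ 2 + α ^ 2 * ‖u x‖ ^ 2
      + 4 * (a x * conj (b x)).re - 2 * α * (a x * conj (u x)).re) := h14.sub h5
  rw [integral_sub h15 h6, integral_sub h14 h5, integral_add h13 h4, integral_add h12 h3,
    integral_add h1 h2, integral_const_mul, integral_const_mul, integral_const_mul,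
    integral_const_mul, integral_const_mul]
  rw [L2 u, L3 u, L1 u]
  ring

lemma L4 (u : SchwartzMap ℝ ℂ) (ε : ℝ) (hε : 0 < ε) :
    (∫ x : ℝ, ‖derivCLM ℝ ℂ u x‖ ^ 2)
      ≤ ε * (∫ x : ℝ, ‖derivCLM ℝ ℂ (derivCLM ℝ ℂ u) x‖ ^ 2)
        + (∫ x : ℝ, ‖u x‖ ^ 2) / (4 * ε) := by
  set a := derivCLM ℝ ℂ (derivCLM ℝ ℂ u) with ha
  have h := L3 u
  have hmono : (∫ x : ℝ, -((a x * conj (u x)).re))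
      ≤ ∫ x : ℝ, (ε * ‖a x‖ ^ 2 + ‖u x‖ ^ 2 / (4 * ε)) := by
    apply integral_mono ((int_re a u).neg)
      (((int_nsq a).const_mul ε).add ((int_nsq u).div_const (4 * ε)))
    intro x
    simp only [Pi.neg_apply, Pi.add_apply]
    have hn : -((a x * conj (u x)).re) ≤ ‖a x‖ * ‖u x‖ := by
      calc -((a x * conj (u x)).re) ≤ |(a x * conj (u x)).re| := neg_le_abs _
        _ ≤ ‖a x * conj (u x)‖ := Complex.abs_re_le_norm _
        _ = ‖a x‖ * ‖u x‖ := by rw [norm_mul, RCLike.norm_conj]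
    have key : 4 * ε * (ε * ‖a x‖ ^ 2 + ‖u x‖ ^ 2 / (4 * ε))
        = 4 * ε ^ 2 * ‖a x‖ ^ 2 + ‖u x‖ ^ 2 := by
      field_simp
    nlinarith [sq_nonneg (2 * ε * ‖a x‖ - ‖u x‖), hε, hn, key]
  rw [integral_neg, h, neg_neg] at hmono
  rwa [integral_add ((int_nsq a).const_mul ε) ((int_nsq u).div_const (4 * ε)),
    integral_const_mul, integral_div] at hmono

/-- For `α ≠ 0` the operator `u ↦ u'' + 2u' - αu` is bounded below from the `H²`-norm to the
`L²`-norm on Schwartz functions: there is `c > 0` with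
`‖u'' + 2u' - αu‖²_{L²} ≥ c (‖u‖²_{L²} + ‖u'‖²_{L²} + ‖u''‖²_{L²})`. -/
theorem stmt7 (α : ℝ) (hα : α ≠ 0) :
    ∃ c : ℝ, 0 < c ∧ ∀ u : SchwartzMap ℝ ℂ,
      c * ((∫ x : ℝ, ‖u x‖ ^ 2) + (∫ x : ℝ, ‖deriv (fun y => u y) x‖ ^ 2) +
            (∫ x : ℝ, ‖deriv (deriv (fun y => u y)) x‖ ^ 2)) ≤
        ∫ x : ℝ, ‖deriv (deriv (fun y => u y)) x + 2 * deriv (fun y => u y) x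
          - (α : ℂ) * u x‖ ^ 2 := by
  have hα2 : 0 < α ^ 2 := lt_of_le_of_ne (sq_nonneg α) (Ne.symm (pow_ne_zero 2 hα))
  by_cases hcase : α < -2
  · -- β = 2α + 4 < 0
    have hβ : 2 * α + 4 < 0 := by linarith
    have hd : α ^ 2 * -(2 * α + 4) ≠ 0 := ne_of_gt (mul_pos hα2 (by linarith))
    obtain ⟨ε, hεdef⟩ : ∃ ε : ℝ, ε = (α ^ 2 + 2 * α + 2) / (α ^ 2 * -(2 * α + 4)) := ⟨_, rfl⟩
    have hεpos : 0 < ε := by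
      rw [hεdef]
      exact div_pos (by nlinarith [sq_nonneg (α + 1)]) (mul_pos hα2 (by linarith))
    obtain ⟨c₁, hc₁def⟩ : ∃ c : ℝ, c = 1 + (2 * α + 4) * ε := ⟨_, rfl⟩
    obtain ⟨c₂, hc₂def⟩ : ∃ c : ℝ, c = α ^ 2 + (2 * α + 4) / (4 * ε) := ⟨_, rfl⟩
    have hε1 : ε * (α ^ 2 * -(2 * α + 4)) = α ^ 2 + 2 * α + 2 := by
      rw [hεdef]; exact div_mul_cancel₀ _ hd
    have k1 : c₁ * α ^ 2 = -2 * α - 2 := by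
      rw [hc₁def]; linear_combination -hε1
    have hc₁pos : 0 < c₁ := by nlinarith [k1, hα2, hcase]
    have k2 : (α ^ 2 * (4 * ε) + (2 * α + 4)) * (-(2 * α + 4)) = -8 * α - 8 := by
      linear_combination 4 * hε1
    have pos2 : 0 < α ^ 2 * (4 * ε) + (2 * α + 4) := by nlinarith [k2, hβ]
    have h4ε : (0:ℝ) < 4 * ε := by linarith
    have hc₂pos : 0 < c₂ := by
      rw [hc₂def, show α ^ 2 + (2 * α + 4) / (4 * ε)
          = (α ^ 2 * (4 * ε) + (2 * α + 4)) / (4 * ε) from by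
        rw [eq_div_iff (ne_of_gt h4ε), add_mul, div_mul_cancel₀ _ (ne_of_gt h4ε)]]
      exact div_pos pos2 h4ε
    have hmpos : 0 < min c₁ c₂ := lt_min hc₁pos hc₂pos
    refine ⟨2 / 3 * min c₁ c₂, by positivity, fun u => ?_⟩
    simp only [sm_deriv_coe]
    rw [main_identity α u]
    have hA : 0 ≤ ∫ x : ℝ, ‖u x‖ ^ 2 := integral_nonneg fun x => by positivity
    have hC : 0 ≤ ∫ x : ℝ, ‖derivCLM ℝ ℂ (derivCLM ℝ ℂ u) x‖ ^ 2 :=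
      integral_nonneg fun x => by positivity
    have hB2 := L4 u (1 / 2) (by norm_num)
    have hB4 := L4 u ε hεpos
    set A : ℝ := ∫ x : ℝ, ‖u x‖ ^ 2 with hAdef
    set B : ℝ := ∫ x : ℝ, ‖derivCLM ℝ ℂ u x‖ ^ 2 with hBdef
    set C : ℝ := ∫ x : ℝ, ‖derivCLM ℝ ℂ (derivCLM ℝ ℂ u) x‖ ^ 2 with hCdef
    have expand : c₂ * A + c₁ * C = α ^ 2 * A + C + (2 * α + 4) * (ε * C + A / (4 * ε)) := by
      rw [hc₁def, hc₂def]; ring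
    have step : (2 * α + 4) * (ε * C + A / (4 * ε)) ≤ (2 * α + 4) * B :=
      mul_le_mul_of_nonpos_left hB4 (le_of_lt hβ)
    calc 2 / 3 * min c₁ c₂ * (A + B + C)
        = min c₁ c₂ * (2 / 3 * (A + B + C)) := by ring
      _ ≤ min c₁ c₂ * (A + C) := by
          apply mul_le_mul_of_nonneg_left (by linarith) hmpos.le
      _ ≤ c₂ * A + c₁ * C := by
          have h1 := mul_le_mul_of_nonneg_right (min_le_right c₁ c₂) hA
          have h2 := mul_le_mul_of_nonneg_right (min_le_left c₁ c₂) hC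
          nlinarith
      _ ≤ C + (4 + 2 * α) * B + α ^ 2 * A := by linarith
  · -- β = 4 + 2α ≥ 0
    push_neg at hcase
    have hmpos : 0 < min 1 (α ^ 2) := lt_min one_pos hα2
    refine ⟨2 / 3 * min 1 (α ^ 2), by positivity, fun u => ?_⟩
    simp only [sm_deriv_coe]
    rw [main_identity α u]
    have hA : 0 ≤ ∫ x : ℝ, ‖u x‖ ^ 2 := integral_nonneg fun x => by positivity
    have hB : 0 ≤ ∫ x : ℝ, ‖derivCLM ℝ ℂ u x‖ ^ 2 := integral_nonneg fun x => by positivity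
    have hC : 0 ≤ ∫ x : ℝ, ‖derivCLM ℝ ℂ (derivCLM ℝ ℂ u) x‖ ^ 2 :=
      integral_nonneg fun x => by positivity
    have hB2 := L4 u (1 / 2) (by norm_num)
    set A : ℝ := ∫ x : ℝ, ‖u x‖ ^ 2 with hAdef
    set B : ℝ := ∫ x : ℝ, ‖derivCLM ℝ ℂ u x‖ ^ 2 with hBdef
    set C : ℝ := ∫ x : ℝ, ‖derivCLM ℝ ℂ (derivCLM ℝ ℂ u) x‖ ^ 2 with hCdef
    have h1 := mul_le_mul_of_nonneg_right (min_le_right 1 (α ^ 2)) hA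
    have h2 := mul_le_mul_of_nonneg_right (min_le_left 1 (α ^ 2)) hC
    have h3 : 0 ≤ (4 + 2 * α) * B := mul_nonneg (by linarith) hB
    calc 2 / 3 * min 1 (α ^ 2) * (A + B + C)
        = min 1 (α ^ 2) * (2 / 3 * (A + B + C)) := by ring
      _ ≤ min 1 (α ^ 2) * (A + C) := by
          apply mul_le_mul_of_nonneg_left (by linarith) hmpos.le
      _ ≤ α ^ 2 * A + 1 * C := by nlinarith
      _ ≤ C + (4 + 2 * α) * B + α ^ 2 * A := by linarith
end
end
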